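/- For every natural number n ≥ 1 and all real ξ, c, the polynomial identity L_n(ξ² c, −ξ) + ξ · L_{n−1}(ξ² c, −ξ) = ((−1)ⁿ / n) · Σ_{k=0}^{n−1} C(n, k) · ξ^{2n−k} · c^{n−k} / (n−k−1)! holds. -/

import Mathlib

open Finset

/-- The two-variable Laguerre polynomials. -/
noncomputable def laguerre2 (n : ℕ) (x y : ℝ) : ℝ :=
  (n.factorial : ℝ) * ∑ k ∈ Finset.range (n + 1),
    (-1 : ℝ) ^ k * x ^ k * y ^ (n - k) /
      (((n - k).factorial : ℝ) * (k.factorial : ℝ) ^ 2)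

lemma lag_eq (n : ℕ) (ξ c : ℝ) :
    laguerre2 n (ξ ^ 2 * c) (-ξ) =
      (-1 : ℝ) ^ n * ∑ k ∈ Finset.range (n + 1),
        (n.factorial : ℝ) * ξ ^ (n + k) * c ^ k /
          (((n - k).factorial : ℝ) * (k.factorial : ℝ) ^ 2) := by
  rw [laguerre2, Finset.mul_sum, Finset.mul_sum]
  refine Finset.sum_congr rfl fun k hk => ?_
  have hk' : k ≤ n := Nat.lt_succ_iff.mp (Finset.mem_range.mp hk)
  have h1 : (-ξ) ^ (n - k) = (-1 : ℝ) ^ (n - k) * ξ ^ (n - k) := by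
    rw [neg_pow]
  have h2 : (-1 : ℝ) ^ k * (-1 : ℝ) ^ (n - k) = (-1 : ℝ) ^ n := by
    rw [← pow_add]; congr 1; omega
  have h3 : (ξ ^ 2 * c) ^ k = ξ ^ (2 * k) * c ^ k := by rw [mul_pow, ← pow_mul]
  have h4 : ξ ^ (2 * k) * ξ ^ (n - k) = ξ ^ (n + k) := by
    rw [← pow_add]; congr 1; omega
  have key : (n.factorial : ℝ) * ((-1 : ℝ) ^ k * (ξ ^ 2 * c) ^ k * (-ξ) ^ (n - k))
      = (-1 : ℝ) ^ n * ((n.factorial : ℝ) * ξ ^ (n + k) * c ^ k) := by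
    rw [h3, h1, ← h2, ← h4]; ring
  rw [mul_div_assoc', mul_div_assoc', key]

lemma coeff (m j : ℕ) (hj : j < m) :
    ((m+1).factorial : ℝ) / (((m-j).factorial : ℝ) * ((j+1).factorial : ℝ)^2)
    - (m.factorial : ℝ) / (((m-1-j).factorial : ℝ) * ((j+1).factorial : ℝ)^2)
    = ((m+1).choose (m-j) : ℝ) / (((m+1 : ℕ) : ℝ) * (j.factorial : ℝ)) := by
  obtain ⟨d, rfl⟩ : ∃ d, m = j + 1 + d := ⟨m - j - 1, by omega⟩
  have e1 : j + 1 + d - j = d + 1 := by omega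
  have e2 : j + 1 + d - 1 - j = d := by omega
  rw [e1, e2]
  have hc : ((j+1+d+1).choose (d+1) : ℝ)
      = ((j+1+d+1).factorial : ℝ) / (((d+1).factorial : ℝ) * ((j+1).factorial : ℝ)) := by
    rw [Nat.cast_choose ℝ (by omega)]
    congr 2
    · norm_cast
      congr 1
      omega
  rw [hc]
  have f1 : ((j+1+d+1).factorial : ℝ) = ((j+1+d+1 : ℕ) : ℝ) * ((j+1+d).factorial : ℝ) := by
    rw [Nat.factorial_succ]; push_cast; ring
  have f2 : ((d+1).factorial : ℝ) = ((d+1 : ℕ) : ℝ) * (d.factorial : ℝ) := by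
    rw [Nat.factorial_succ]; push_cast; ring
  have f3 : ((j+1).factorial : ℝ) = ((j+1 : ℕ) : ℝ) * (j.factorial : ℝ) := by
    rw [Nat.factorial_succ]; push_cast; ring
  rw [f1, f2, f3]
  have n1 : ((j+1+d).factorial : ℝ) ≠ 0 := Nat.cast_ne_zero.mpr (Nat.factorial_ne_zero _)
  have n2 : (d.factorial : ℝ) ≠ 0 := Nat.cast_ne_zero.mpr (Nat.factorial_ne_zero _)
  have n3 : (j.factorial : ℝ) ≠ 0 := Nat.cast_ne_zero.mpr (Nat.factorial_ne_zero _)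
  push_cast
  field_simp
  ring

theorem laguerre2_combination_eq (n : ℕ) (hn : 1 ≤ n) (ξ c : ℝ) :
    laguerre2 n (ξ ^ 2 * c) (-ξ) + ξ * laguerre2 (n - 1) (ξ ^ 2 * c) (-ξ) =
      (-1 : ℝ) ^ n / (n : ℝ) *
        ∑ k ∈ Finset.range n,
          (n.choose k : ℝ) * ξ ^ (2 * n - k) * c ^ (n - k) /
            ((n - k - 1).factorial : ℝ) := by
  obtain ⟨m, rfl⟩ : ∃ m, n = m + 1 := ⟨n - 1, by omega⟩
  clear hn
  rw [lag_eq, Nat.add_sub_cancel, lag_eq]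
  -- rewrite RHS sum by reflecting
  conv_rhs => rw [← Finset.sum_range_reflect]
  have hR : ∀ j ∈ Finset.range (m+1),
      (((m+1).choose (m + 1 - 1 - j) : ℝ) * ξ ^ (2 * (m+1) - (m + 1 - 1 - j)) *
          c ^ ((m+1) - (m + 1 - 1 - j)) / (((m+1) - (m + 1 - 1 - j) - 1).factorial : ℝ))
      = ((m+1).choose (m - j) : ℝ) * ξ ^ (m + 2 + j) * c ^ (j + 1) / (j.factorial : ℝ) := by
    intro j hj
    have hj' : j ≤ m := Nat.lt_succ_iff.mp (Finset.mem_range.mp hj)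
    have E1 : m + 1 - 1 - j = m - j := by omega
    have E2 : 2 * (m + 1) - (m - j) = m + 2 + j := by omega
    have E3 : m + 1 - (m - j) = j + 1 := by omega
    have E4 : m + 1 - (m - j) - 1 = j := by omega
    rw [E1, E2, E4, E3]
  rw [Finset.sum_congr rfl hR]
  -- key sum identity
  have hBsum : ξ * ∑ k ∈ Finset.range (m+1),
      (m.factorial : ℝ) * ξ ^ (m + k) * c ^ k /
        (((m - k).factorial : ℝ) * (k.factorial : ℝ) ^ 2)
      = ∑ k ∈ Finset.range (m+1),
      (m.factorial : ℝ) * ξ ^ (m + 1 + k) * c ^ k /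
        (((m - k).factorial : ℝ) * (k.factorial : ℝ) ^ 2) := by
    rw [Finset.mul_sum]
    refine Finset.sum_congr rfl fun k _ => ?_
    rw [mul_div_assoc']
    congr 1
    rw [show m + 1 + k = m + k + 1 from by omega, pow_succ]
    ring
  have key : (∑ k ∈ Finset.range (m+2),
      ((m+1).factorial : ℝ) * ξ ^ (m + 1 + k) * c ^ k /
        (((m + 1 - k).factorial : ℝ) * (k.factorial : ℝ) ^ 2))
      - ∑ k ∈ Finset.range (m+1),
      (m.factorial : ℝ) * ξ ^ (m + 1 + k) * c ^ k /
        (((m - k).factorial : ℝ) * (k.factorial : ℝ) ^ 2)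
      = (1 / ((m+1 : ℕ) : ℝ)) * ∑ j ∈ Finset.range (m+1),
          ((m+1).choose (m - j) : ℝ) * ξ ^ (m + 2 + j) * c ^ (j + 1) / (j.factorial : ℝ) := by
    rw [Finset.sum_range_succ, add_sub_right_comm, ← Finset.sum_sub_distrib,
      Finset.sum_range_succ' _ m]
    rw [Finset.sum_range_succ _ m, mul_add]
    have h0 : ((m+1).factorial : ℝ) * ξ ^ (m + 1 + 0) * c ^ 0 /
        (((m + 1 - 0).factorial : ℝ) * ((0:ℕ).factorial : ℝ) ^ 2)
        - (m.factorial : ℝ) * ξ ^ (m + 1 + 0) * c ^ 0 /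
        (((m - 0).factorial : ℝ) * ((0:ℕ).factorial : ℝ) ^ 2) = 0 := by
      simp [Nat.factorial]
      have : ((m+1).factorial : ℝ) ≠ 0 := Nat.cast_ne_zero.mpr (Nat.factorial_ne_zero _)
      have : (m.factorial : ℝ) ≠ 0 := Nat.cast_ne_zero.mpr (Nat.factorial_ne_zero _)
      field_simp
      ring
    have hlast : ((m+1).factorial : ℝ) * ξ ^ (m + 1 + (m+1)) * c ^ (m+1) /
        (((m + 1 - (m+1)).factorial : ℝ) * (((m+1):ℕ).factorial : ℝ) ^ 2)
        = (1 / ((m+1 : ℕ) : ℝ)) *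
          (((m+1).choose (m - m) : ℝ) * ξ ^ (m + 2 + m) * c ^ (m + 1) / (m.factorial : ℝ)) := by
      rw [Nat.sub_self, Nat.sub_self, show m + 1 + (m+1) = m + 2 + m from by omega]
      simp only [Nat.choose_zero_right, Nat.factorial_zero, Nat.cast_one, one_mul]
      have f1 : (((m+1):ℕ).factorial : ℝ) = ((m+1 : ℕ) : ℝ) * (m.factorial : ℝ) := by
        rw [Nat.factorial_succ]; push_cast; ring
      rw [f1]
      have n1 : (m.factorial : ℝ) ≠ 0 := Nat.cast_ne_zero.mpr (Nat.factorial_ne_zero _)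
      have n2 : ((m+1 : ℕ) : ℝ) ≠ 0 := by push_cast; positivity
      field_simp
    have hterm : ∀ k ∈ Finset.range m,
        ((m+1).factorial : ℝ) * ξ ^ (m + 1 + (k+1)) * c ^ (k+1) /
          (((m + 1 - (k+1)).factorial : ℝ) * (((k+1):ℕ).factorial : ℝ) ^ 2)
        - (m.factorial : ℝ) * ξ ^ (m + 1 + (k+1)) * c ^ (k+1) /
          (((m - (k+1)).factorial : ℝ) * (((k+1):ℕ).factorial : ℝ) ^ 2)
        = (1 / ((m+1 : ℕ) : ℝ)) *
          (((m+1).choose (m - k) : ℝ) * ξ ^ (m + 2 + k) * c ^ (k + 1) / (k.factorial : ℝ)) := by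
      intro k hk
      have hk' : k < m := Finset.mem_range.mp hk
      have E1 : m + 1 - (k+1) = m - k := by omega
      have E2 : m - (k+1) = m - 1 - k := by omega
      have E3 : m + 1 + (k+1) = m + 2 + k := by omega
      rw [E1, E2, E3]
      have := coeff m k hk'
      have hx : ξ ^ (m + 2 + k) * c ^ (k+1) *
          (((m+1).factorial : ℝ) / (((m-k).factorial : ℝ) * ((k+1).factorial : ℝ)^2)
          - (m.factorial : ℝ) / (((m-1-k).factorial : ℝ) * ((k+1).factorial : ℝ)^2))
          = ξ ^ (m + 2 + k) * c ^ (k+1) *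
            (((m+1).choose (m-k) : ℝ) / (((m+1 : ℕ) : ℝ) * (k.factorial : ℝ))) := by
        rw [this]
      calc ((m+1).factorial : ℝ) * ξ ^ (m + 2 + k) * c ^ (k+1) /
          (((m - k).factorial : ℝ) * (((k+1):ℕ).factorial : ℝ) ^ 2)
          - (m.factorial : ℝ) * ξ ^ (m + 2 + k) * c ^ (k+1) /
          (((m - 1 - k).factorial : ℝ) * (((k+1):ℕ).factorial : ℝ) ^ 2)
          = ξ ^ (m + 2 + k) * c ^ (k+1) *
          (((m+1).factorial : ℝ) / (((m-k).factorial : ℝ) * ((k+1).factorial : ℝ)^2)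
          - (m.factorial : ℝ) / (((m-1-k).factorial : ℝ) * ((k+1).factorial : ℝ)^2)) := by
            ring
        _ = ξ ^ (m + 2 + k) * c ^ (k+1) *
            (((m+1).choose (m-k) : ℝ) / (((m+1 : ℕ) : ℝ) * (k.factorial : ℝ))) := hx
        _ = (1 / ((m+1 : ℕ) : ℝ)) *
          (((m+1).choose (m - k) : ℝ) * ξ ^ (m + 2 + k) * c ^ (k + 1) / (k.factorial : ℝ)) := by
            ring
    rw [Finset.sum_congr rfl hterm, h0, Finset.mul_sum, hlast]
    ring
  -- put everything together
  have pm : (-1 : ℝ) ^ m = -(-1 : ℝ) ^ (m+1) := by rw [pow_succ]; ring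
  rw [pm]
  rw [div_eq_mul_one_div]
  calc (-1:ℝ)^(m+1) * ∑ k ∈ Finset.range (m+2),
      ((m+1).factorial : ℝ) * ξ ^ (m + 1 + k) * c ^ k /
        (((m + 1 - k).factorial : ℝ) * (k.factorial : ℝ) ^ 2)
      + ξ * (-(-1:ℝ)^(m+1) * ∑ k ∈ Finset.range (m+1),
      (m.factorial : ℝ) * ξ ^ (m + k) * c ^ k /
        (((m - k).factorial : ℝ) * (k.factorial : ℝ) ^ 2))
      = (-1:ℝ)^(m+1) * ((∑ k ∈ Finset.range (m+2),
      ((m+1).factorial : ℝ) * ξ ^ (m + 1 + k) * c ^ k /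
        (((m + 1 - k).factorial : ℝ) * (k.factorial : ℝ) ^ 2))
      - ξ * ∑ k ∈ Finset.range (m+1),
      (m.factorial : ℝ) * ξ ^ (m + k) * c ^ k /
        (((m - k).factorial : ℝ) * (k.factorial : ℝ) ^ 2)) := by ring
    _ = (-1:ℝ)^(m+1) * ((1 / ((m+1 : ℕ) : ℝ)) * ∑ j ∈ Finset.range (m+1),
          ((m+1).choose (m - j) : ℝ) * ξ ^ (m + 2 + j) * c ^ (j + 1) / (j.factorial : ℝ)) := by
        rw [hBsum, key]
    _ = (-1:ℝ)^(m+1) * (1 / ((m+1 : ℕ) : ℝ)) * ∑ j ∈ Finset.range (m+1),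
          ((m+1).choose (m - j) : ℝ) * ξ ^ (m + 2 + j) * c ^ (j + 1) / (j.factorial : ℝ) := by
        ring
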